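/- With N^R as in Scenario 2 (N^R = (Nβ + (u^P − c^R)s_C^P)·s_C^R/(β(s_C^R + s_C^P))), the non-overlap condition t_0^P ≥ t_1^R, i.e., t* − (N − N^R)/s_C^P ≥ t* − (β/(α+π))·N^R/s_C^R, holds if and only if u^P − c^R ≥ Nβ(α+π−β)/(β s_C^P + (α+π)s_C^R). -/

import Mathlib

theorem stmt12 (α β π N uP cR sCR sCP tstar : ℝ)
    (hβ : 0 < β) (hβα : β < α) (hπ : 0 ≤ π) (hβαπ : β < α + π) (hc : cR < uP)
    (hN : 0 < N) (hsCR : 0 < sCR) (hsCP : 0 < sCP)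
    (NR : ℝ)
    (hNR : NR = (N * β + (uP - cR) * sCP) * sCR / (β * (sCR + sCP))) :
    (tstar - (N - NR) / sCP ≥ tstar - (β / (α + π)) * (NR / sCR)) ↔
      uP - cR ≥ N * β * (α + π - β) / (β * sCP + (α + π) * sCR) := by
  subst hNR
  have hαπ : 0 < α + π := hβ.trans hβαπ
  have hd1 : 0 < β * (sCR + sCP) := by positivity
  have hd2 : 0 < β * sCP + (α + π) * sCR := by positivity
  rw [ge_iff_le, ge_iff_le, sub_le_sub_iff_left, div_le_iff₀ hd2]
  rw [div_le_iff₀ hsCP]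
  field_simp
  have hK : (0:ℝ) < sCP * (β * (sCR + sCP)) * sCR := by positivity
  constructor <;> intro h
  · have h' : (α + π) * (N * β - (uP - cR) * sCR) * (sCP * (β * (sCR + sCP)) * sCR) ≤
        β * (N * β + (uP - cR) * sCP) * (sCP * (β * (sCR + sCP)) * sCR) := by nlinarith [h]
    have := le_of_mul_le_mul_right h' hK
    nlinarith [this]
  · have h2 : (α + π) * (N * β - (uP - cR) * sCR) ≤ β * (N * β + (uP - cR) * sCP) := by
      nlinarith [h]
    nlinarith [mul_le_mul_of_nonneg_right h2 hK.le]
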